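/- arXiv:2303.15835 — 2 statements merged into one kernel-verified Lean document; each statement's English description precedes it below -/
import Mathlib

section
/- For real parameters α₁, α₂, α₃, k with α₁α₂α₃ ≠ 0 and any x ∈ ℝ³, the matrix-vector product P₁(x) · (α₂x¹, -α₁x², -kα₁/α₃)ᵀ equals the zero vector, i.e. C₁ is a Casimir of the first Poisson realization. -/
theorem stmt_2 (α₁ α₂ α₃ k : ℝ) (hα : α₁ * α₂ * α₃ ≠ 0) (x : Fin 3 → ℝ) :
    (!![0, k, -α₃ * x 1;
        -k, 0, -(α₂ * α₃ / α₁) * x 0;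
        α₃ * x 1, (α₂ * α₃ / α₁) * x 0, 0] : Matrix (Fin 3) (Fin 3) ℝ).mulVec
      ![α₂ * x 0, -α₁ * x 1, -k * α₁ / α₃] = 0 := by
  have h1 : α₁ ≠ 0 := fun h => hα (by simp [h])
  have h3 : α₃ ≠ 0 := fun h => hα (by simp [h])
  funext i
  fin_cases i <;>
    simp [Matrix.mulVec, dotProduct, Fin.sum_univ_succ] <;> field_simp <;> ring
end

section
/- For the Rabinovich system with one control (α₁ = 1, α₂ = -1, α₃ = 1): ẋ¹ = x²x³, ẋ² = -x¹x³ - kx¹, ẋ³ = x¹x², the quantities (x¹)² - (x³)² and (x¹)² + (x²)² + 2kx³ are conserved along any differentiable solution. -/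
theorem stmt_18 (k : ℝ) (x1 x2 x3 : ℝ → ℝ)
    (h1 : ∀ t, HasDerivAt x1 (x2 t * x3 t) t)
    (h2 : ∀ t, HasDerivAt x2 (-(x1 t * x3 t) - k * x1 t) t)
    (h3 : ∀ t, HasDerivAt x3 (x1 t * x2 t) t) :
    (∀ t, HasDerivAt (fun t => (x1 t) ^ 2 - (x3 t) ^ 2) 0 t) ∧
    (∀ t, HasDerivAt (fun t => (x1 t) ^ 2 + (x2 t) ^ 2 + 2 * k * x3 t) 0 t) := by
  constructor
  · intro t
    have : HasDerivAt (fun t => (x1 t) ^ 2 - (x3 t) ^ 2) _ t := (((h1 t).fun_pow 2).fun_sub ((h3 t).fun_pow 2))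
    convert this using 1
    ring
  · intro t
    have : HasDerivAt (fun t => (x1 t) ^ 2 + (x2 t) ^ 2 + 2 * k * x3 t) _ t := (((h1 t).fun_pow 2).fun_add ((h2 t).fun_pow 2)).fun_add ((h3 t).const_mul (2*k))
    convert this using 1
    ring
end
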